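/- arXiv:2005.08808 — 3 statements merged into one kernel-verified Lean document; each statement's English description precedes it below -/
import Mathlib

section
/- Let σ > 0 and μ_z, μ_w ∈ ℝ, let ν = √(μ_z² + μ_w²), and let Z and W be independent real random variables with Z distributed as N(μ_z, σ²) and W distributed as N(μ_w, σ²). Then the random variable d = √(Z² + W²) has law absolutely continuous with respect to Lebesgue measure on (0, ∞), with density f_d(s) = (s / (2πσ²)) · exp(−(s² + ν²) / (2σ²)) · ∫_{−π}^{π} exp((s·ν / σ²) · cos u) du for s > 0; that is, d follows the Rice(ν, σ) distribution, where the modified Bessel function I₀(x) is written explicitly as (1/(2π)) ∫_{−π}^{π} e^{x cos u} du. -/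
open MeasureTheory ProbabilityTheory Set Real
open scoped Real ENNReal NNReal

lemma my_lintegral_polar (g : ℝ × ℝ → ℝ≥0∞) :
    ∫⁻ p, g p = ∫⁻ p in polarCoord.target, ENNReal.ofReal p.1 * g (polarCoord.symm p) := by
  set B : ℝ × ℝ → ℝ × ℝ →L[ℝ] ℝ × ℝ := fun p =>
    LinearMap.toContinuousLinearMap (Matrix.toLin (Module.Basis.finTwoProd ℝ) (Module.Basis.finTwoProd ℝ)
      !![cos p.2, -p.1 * sin p.2; sin p.2, p.1 * cos p.2])
  have A : ∀ p ∈ polarCoord.target, HasFDerivWithinAt polarCoord.symm (B p) polarCoord.target p :=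
    fun p _ => (hasFDerivAt_polarCoord_symm p).hasFDerivWithinAt
  have B_det : ∀ p, (B p).det = p.1 := by
    intro p
    conv_rhs => rw [← one_mul p.1, ← cos_sq_add_sin_sq p.2]
    simp only [B, neg_mul, LinearMap.det_toContinuousLinearMap, LinearMap.det_toLin,
      Matrix.det_fin_two_of, sub_neg_eq_add]
    ring
  have hinj : InjOn polarCoord.symm polarCoord.target := polarCoord.symm.injOn
  calc ∫⁻ p, g p = ∫⁻ p in polarCoord.source, g p := by
        rw [← setLIntegral_univ]
        exact (setLIntegral_congr polarCoord_source_ae_eq_univ.symm)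
    _ = ∫⁻ p in polarCoord.symm '' polarCoord.target, g p := by
        rw [polarCoord.symm_image_target_eq_source]
    _ = ∫⁻ p in polarCoord.target, ENNReal.ofReal |(B p).det| * g (polarCoord.symm p) :=
        lintegral_image_eq_lintegral_abs_det_fderiv_mul volume
          polarCoord.open_target.measurableSet A hinj g
    _ = ∫⁻ p in polarCoord.target, ENNReal.ofReal p.1 * g (polarCoord.symm p) := by
        refine setLIntegral_congr_fun polarCoord.open_target.measurableSet
          (fun p hp => ?_)
        rw [B_det, abs_of_pos hp.1]

lemma my_withDensity_prod (f g : ℝ → ℝ) (hf : Measurable f) (hg : Measurable g) :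
    (volume.withDensity (fun x => ENNReal.ofReal (f x))).prod
        (volume.withDensity (fun x => ENNReal.ofReal (g x)))
      = (volume : Measure (ℝ × ℝ)).withDensity
          (fun p => ENNReal.ofReal (f p.1) * ENNReal.ofReal (g p.2)) := by
  refine Measure.prod_eq fun s t hs ht => ?_
  rw [withDensity_apply _ (hs.prod ht), Measure.volume_eq_prod, ← Measure.prod_restrict,
    MeasureTheory.lintegral_prod_mul (hf.ennreal_ofReal).aemeasurable
      (hg.ennreal_ofReal).aemeasurable,
    withDensity_apply _ hs, withDensity_apply _ ht]

lemma my_exists_phase (μz μw ν : ℝ) (hν : ν = Real.sqrt (μz^2 + μw^2)) :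
    ∃ φ, ∀ θ, μz * Real.cos θ + μw * Real.sin θ = ν * Real.cos (θ - φ) := by
  rcases eq_or_ne ν 0 with h0 | h0
  · have h : μz ^ 2 + μw ^ 2 = 0 := by
      have := hν ▸ h0
      nlinarith [Real.sq_sqrt (by positivity : (0:ℝ) ≤ μz^2 + μw^2), sq_nonneg μz, sq_nonneg μw]
    have hz : μz = 0 := by nlinarith [sq_nonneg μz, sq_nonneg μw]
    have hw : μw = 0 := by nlinarith [sq_nonneg μz, sq_nonneg μw]
    exact ⟨0, fun θ => by simp [hz, hw, h0]⟩
  · set z : ℂ := ⟨μz, μw⟩ with hz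
    have habs : ‖z‖ = ν := by
      rw [hν, Complex.norm_def, Complex.normSq_mk]; ring_nf
    have hzne : z ≠ 0 := by
      intro h; rw [h] at habs; simp at habs; exact h0 habs.symm
    refine ⟨z.arg, fun θ => ?_⟩
    rw [Real.cos_sub, Complex.cos_arg hzne, Complex.sin_arg, habs]
    have : z.re = μz := rfl
    have : z.im = μw := rfl
    field_simp
    ring

lemma my_shift (c φ : ℝ) :
    ∫ θ in (-π)..π, Real.exp (c * Real.cos (θ - φ)) = ∫ u in (-π)..π, Real.exp (c * Real.cos u) := by
  have hp : Function.Periodic (fun u => Real.exp (c * Real.cos u)) (2*π) := fun x => by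
    simp [Real.cos_add_two_pi]
  rw [intervalIntegral.integral_comp_sub_right (fun u => Real.exp (c * Real.cos u)) φ]
  have h := hp.intervalIntegral_add_eq (-π - φ) (-π)
  have e1 : -π - φ + 2*π = π - φ := by ring
  have e2 : -π + 2*π = π := by ring
  rw [e1, e2] at h
  exact h

lemma my_key (σ : ℝ) (hσ : 0 < σ) (μz μw ν : ℝ) (hν : ν = Real.sqrt (μz^2 + μw^2)) (s : ℝ) :
    ∫ θ in Ioo (-π) π, gaussianPDFReal μz ⟨σ^2, sq_nonneg σ⟩ (s * Real.cos θ) *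
        gaussianPDFReal μw ⟨σ^2, sq_nonneg σ⟩ (s * Real.sin θ)
      = (1 / (2*π*σ^2)) * Real.exp (-((s^2 + ν^2)/(2*σ^2))) *
          ∫ u in (-π)..π, Real.exp ((s*ν/σ^2) * Real.cos u) := by
  obtain ⟨φ, hφ⟩ := my_exists_phase μz μw ν hν
  have hπ := Real.pi_pos
  have hA : (0:ℝ) < 2*π*σ^2 := by positivity
  have hν2 : ν^2 = μz^2 + μw^2 := by
    rw [hν]; exact Real.sq_sqrt (by positivity)
  have h1 : ∀ θ : ℝ, gaussianPDFReal μz ⟨σ^2, sq_nonneg σ⟩ (s * Real.cos θ) *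
        gaussianPDFReal μw ⟨σ^2, sq_nonneg σ⟩ (s * Real.sin θ)
      = (1/(2*π*σ^2)) * Real.exp (-((s^2+ν^2)/(2*σ^2))) *
          Real.exp ((s*ν/σ^2) * Real.cos (θ - φ)) := by
    intro θ
    simp only [gaussianPDFReal, NNReal.coe_mk]
    have hcs : Real.cos θ^2 + Real.sin θ^2 = 1 := Real.cos_sq_add_sin_sq θ
    have key : (s*Real.cos θ - μz)^2 + (s*Real.sin θ - μw)^2
        = s^2 + ν^2 - 2*s*(ν*Real.cos (θ-φ)) := by
      have hp := hφ θ
      linear_combination s^2*hcs - hν2 - 2*s*hp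
    have hfac : (Real.sqrt (2*π*σ^2))⁻¹ * (Real.sqrt (2*π*σ^2))⁻¹ = 1/(2*π*σ^2) := by
      rw [← mul_inv, Real.mul_self_sqrt hA.le, one_div]
    calc (Real.sqrt (2*π*σ^2))⁻¹ * Real.exp (-(s*Real.cos θ - μz)^2 / (2*σ^2)) *
          ((Real.sqrt (2*π*σ^2))⁻¹ * Real.exp (-(s*Real.sin θ - μw)^2 / (2*σ^2)))
        = ((Real.sqrt (2*π*σ^2))⁻¹ * (Real.sqrt (2*π*σ^2))⁻¹) *
            Real.exp (-(s*Real.cos θ - μz)^2 / (2*σ^2) + -(s*Real.sin θ - μw)^2 / (2*σ^2)) := by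
          rw [Real.exp_add]; ring
      _ = (1/(2*π*σ^2)) * Real.exp (-((s^2+ν^2)/(2*σ^2)) + (s*ν/σ^2) * Real.cos (θ - φ)) := by
          rw [hfac]
          congr 1
          rw [Real.exp_eq_exp]
          have hσ2 : σ^2 ≠ 0 := by positivity
          linear_combination (-(1/(2*σ^2))) * key
      _ = (1/(2*π*σ^2)) * Real.exp (-((s^2+ν^2)/(2*σ^2))) *
            Real.exp ((s*ν/σ^2) * Real.cos (θ - φ)) := by
          rw [Real.exp_add]; ring
  calc ∫ θ in Ioo (-π) π, gaussianPDFReal μz ⟨σ^2, sq_nonneg σ⟩ (s * Real.cos θ) *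
        gaussianPDFReal μw ⟨σ^2, sq_nonneg σ⟩ (s * Real.sin θ)
      = ∫ θ in Ioo (-π) π, (1/(2*π*σ^2)) * Real.exp (-((s^2+ν^2)/(2*σ^2))) *
          Real.exp ((s*ν/σ^2) * Real.cos (θ - φ)) := by
        exact integral_congr_ae (Filter.Eventually.of_forall fun θ => h1 θ)
    _ = (1/(2*π*σ^2)) * Real.exp (-((s^2+ν^2)/(2*σ^2))) *
          ∫ θ in Ioo (-π) π, Real.exp ((s*ν/σ^2) * Real.cos (θ - φ)) := by
        rw [integral_const_mul]
    _ = (1/(2*π*σ^2)) * Real.exp (-((s^2+ν^2)/(2*σ^2))) *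
          ∫ θ in (-π)..π, Real.exp ((s*ν/σ^2) * Real.cos (θ - φ)) := by
        rw [intervalIntegral.integral_of_le (by linarith), integral_Ioc_eq_integral_Ioo]
    _ = (1/(2*π*σ^2)) * Real.exp (-((s^2+ν^2)/(2*σ^2))) *
          ∫ u in (-π)..π, Real.exp ((s*ν/σ^2) * Real.cos u) := by
        rw [my_shift]

set_option maxHeartbeats 2000000 in
/-- The radial part d = √(Z²+W²) of a bivariate normal vector with independent
equal-variance coordinates has the Rice(ν, σ) density with respect to Lebesgue measure on
(0, ∞), with the modified Bessel function written explicitly. -/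
theorem stmt_1
    (σ μz μw : ℝ) (hσ : 0 < σ)
    (ν : ℝ) (hν : ν = Real.sqrt (μz^2 + μw^2))
    (Ω : Type*) [MeasurableSpace Ω] (P : Measure Ω) [IsProbabilityMeasure P]
    (Z W : Ω → ℝ) (hZm : Measurable Z) (hWm : Measurable W)
    (hZW : IndepFun Z W P)
    (hZ : Measure.map Z P = gaussianReal μz ⟨σ^2, sq_nonneg σ⟩)
    (hW : Measure.map W P = gaussianReal μw ⟨σ^2, sq_nonneg σ⟩) :
    Measure.map (fun ω => Real.sqrt ((Z ω)^2 + (W ω)^2)) P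
      = (volume.restrict (Ioi (0:ℝ))).withDensity
          (fun s => ENNReal.ofReal ((s / (2*π*σ^2)) * Real.exp (-((s^2 + ν^2)/(2*σ^2))) *
            ∫ u in (-π)..π, Real.exp ((s*ν/σ^2) * Real.cos u))) := by
  have hπ := Real.pi_pos
  set V : ℝ≥0 := ⟨σ^2, sq_nonneg σ⟩ with hVdef
  have hVcoe : (V : ℝ) = σ^2 := rfl
  have hV : V ≠ 0 := by
    intro h
    have h2 := congrArg NNReal.toReal h
    rw [hVcoe] at h2
    exact (by positivity : σ^2 ≠ 0) (by simpa using h2)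
  set f : ℝ → ℝ := gaussianPDFReal μz V with hf
  set g : ℝ → ℝ := gaussianPDFReal μw V with hg
  set ρ : ℝ → ℝ≥0∞ := fun s => ENNReal.ofReal ((s / (2*π*σ^2)) *
      Real.exp (-((s^2 + ν^2)/(2*σ^2))) *
      ∫ u in (-π)..π, Real.exp ((s*ν/σ^2) * Real.cos u)) with hρ
  -- joint law
  have hpair : Measure.map (fun ω => (Z ω, W ω)) P
      = (volume : Measure (ℝ × ℝ)).withDensity
          (fun p => ENNReal.ofReal (f p.1) * ENNReal.ofReal (g p.2)) := by
    rw [(indepFun_iff_map_prod_eq_prod_map_map hZm.aemeasurable hWm.aemeasurable).mp hZW,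
      hZ, hW, gaussianReal_of_var_ne_zero _ hV, gaussianReal_of_var_ne_zero _ hV,
      gaussianPDF_def, gaussianPDF_def]
    exact my_withDensity_prod f g (measurable_gaussianPDFReal _ _) (measurable_gaussianPDFReal _ _)
  set r : ℝ × ℝ → ℝ := fun p => Real.sqrt (p.1^2 + p.2^2) with hr
  have hrm : Measurable r := by
    apply Measurable.sqrt
    exact (measurable_fst.pow_const 2).add (measurable_snd.pow_const 2)
  have hdm : Measurable (fun ω => Real.sqrt ((Z ω)^2 + (W ω)^2)) := by
    apply Measurable.sqrt
    exact (hZm.pow_const 2).add (hWm.pow_const 2)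
  set F : ℝ × ℝ → ℝ≥0∞ := fun p => ENNReal.ofReal (f p.1) * ENNReal.ofReal (g p.2) with hF
  have hFm : Measurable F :=
    ((measurable_gaussianPDFReal μz V).comp measurable_fst).ennreal_ofReal.mul
      ((measurable_gaussianPDFReal μw V).comp measurable_snd).ennreal_ofReal
  ext A hA
  rw [Measure.map_apply hdm hA, withDensity_apply _ hA]
  have hpre : (fun ω => Real.sqrt ((Z ω)^2 + (W ω)^2)) ⁻¹' A
      = (fun ω => (Z ω, W ω)) ⁻¹' (r ⁻¹' A) := rfl
  rw [hpre, ← Measure.map_apply (hZm.prodMk hWm) (hrm hA), hpair,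
    withDensity_apply _ (hrm hA), ← lintegral_indicator (hrm hA) _,
    my_lintegral_polar]
  have hsymm : ∀ p : ℝ × ℝ, polarCoord.symm p = (p.1 * Real.cos p.2, p.1 * Real.sin p.2) :=
    fun p => rfl
  have htarget : polarCoord.target = Ioi (0:ℝ) ×ˢ Ioo (-π) π := rfl
  simp only [hsymm, htarget]
  rw [Measure.volume_eq_prod, ← Measure.prod_restrict]
  have hqm : Measurable (fun p : ℝ × ℝ =>
      ENNReal.ofReal p.1 * (r ⁻¹' A).indicator F (p.1 * Real.cos p.2, p.1 * Real.sin p.2)) := by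
    apply Measurable.mul measurable_fst.ennreal_ofReal
    exact (hFm.indicator (hrm hA)).comp
      ((measurable_fst.mul (Real.measurable_cos.comp measurable_snd)).prodMk
        (measurable_fst.mul (Real.measurable_sin.comp measurable_snd)))
  rw [MeasureTheory.lintegral_prod _ hqm.aemeasurable]
  -- RHS to indicator form
  rw [← lintegral_indicator hA _]
  refine lintegral_congr_ae ((ae_restrict_iff' measurableSet_Ioi).2
    (Filter.Eventually.of_forall fun s hs => ?_))
  have hs0 : (0:ℝ) < s := hs
  have hrs : ∀ θ : ℝ, r (s * Real.cos θ, s * Real.sin θ) = s := by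
    intro θ
    have h1 : (s * Real.cos θ)^2 + (s * Real.sin θ)^2 = s^2 := by
      linear_combination s^2 * (Real.cos_sq_add_sin_sq θ)
    rw [hr]
    simp only
    rw [h1, Real.sqrt_sq hs0.le]
  by_cases hsA : s ∈ A
  · rw [Set.indicator_of_mem hsA]
    have hmem : ∀ θ : ℝ, (s * Real.cos θ, s * Real.sin θ) ∈ r ⁻¹' A := fun θ => by
      rw [Set.mem_preimage, hrs θ]; exact hsA
    have hfc : Continuous f := by
      rw [hf, gaussianPDFReal_def]; fun_prop
    have hgc : Continuous g := by
      rw [hg, gaussianPDFReal_def]; fun_prop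
    have hint : IntegrableOn (fun θ : ℝ => f (s * Real.cos θ) * g (s * Real.sin θ))
        (Ioo (-π) π) := by
      apply ContinuousOn.integrableOn_compact isCompact_Icc
        (Continuous.continuousOn (by fun_prop)) |>.mono_set Ioo_subset_Icc_self
    have hnn : (0:ℝ → ℝ) ≤ᵐ[volume.restrict (Ioo (-π) π)]
        fun θ : ℝ => f (s * Real.cos θ) * g (s * Real.sin θ) :=
      Filter.Eventually.of_forall fun θ =>
        mul_nonneg (gaussianPDFReal_nonneg _ _ _) (gaussianPDFReal_nonneg _ _ _)
    calc ∫⁻ θ, ENNReal.ofReal s * (r ⁻¹' A).indicator F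
          (s * Real.cos θ, s * Real.sin θ) ∂(volume.restrict (Ioo (-π) π))
        = ∫⁻ θ, ENNReal.ofReal s *
            ENNReal.ofReal (f (s * Real.cos θ) * g (s * Real.sin θ))
              ∂(volume.restrict (Ioo (-π) π)) := by
          refine lintegral_congr fun θ => ?_
          rw [Set.indicator_of_mem (hmem θ), hF]
          simp only
          rw [ENNReal.ofReal_mul (gaussianPDFReal_nonneg _ _ _)]
      _ = ENNReal.ofReal s * ∫⁻ θ, ENNReal.ofReal (f (s * Real.cos θ) * g (s * Real.sin θ))
              ∂(volume.restrict (Ioo (-π) π)) :=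
          lintegral_const_mul' _ _ ENNReal.ofReal_ne_top
      _ = ENNReal.ofReal s * ENNReal.ofReal
            (∫ θ in Ioo (-π) π, f (s * Real.cos θ) * g (s * Real.sin θ)) := by
          rw [← ofReal_integral_eq_lintegral_ofReal hint hnn]
      _ = ρ s := by
          rw [hf, hg, hVdef, my_key σ hσ μz μw ν hν s, hρ]
          rw [← ENNReal.ofReal_mul hs0.le]
          congr 1
          ring
  · rw [Set.indicator_of_notMem hsA]
    have hmem : ∀ θ : ℝ, (s * Real.cos θ, s * Real.sin θ) ∉ r ⁻¹' A := fun θ => by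
      rw [Set.mem_preimage, hrs θ]; exact hsA
    calc ∫⁻ θ, ENNReal.ofReal s * (r ⁻¹' A).indicator F
          (s * Real.cos θ, s * Real.sin θ) ∂(volume.restrict (Ioo (-π) π))
        = ∫⁻ _θ, 0 ∂(volume.restrict (Ioo (-π) π)) := by
          refine lintegral_congr fun θ => ?_
          rw [Set.indicator_of_notMem (hmem θ), mul_zero]
      _ = 0 := lintegral_zero
end

section
/- Let σ > 0 and (μ_z, μ_w) ∈ ℝ² with (μ_z, μ_w) ≠ (0, 0), let ν = √(μ_z² + μ_w²) and θ₀ = atan2(μ_w, μ_z). Define for s > 0 and θ ∈ (−π, π] the joint polar density f(s, θ) = (s / (2πσ²)) · exp(−((s·cos θ − μ_z)² + (s·sin θ − μ_w)²) / (2σ²)) and the radial density f_d(s) = (s / (2πσ²)) · exp(−(s² + ν²)/(2σ²)) · ∫_{−π}^{π} exp((sν/σ²) cos u) du. Then for all s > 0 and θ ∈ (−π, π], f(s, θ) = f_d(s) · exp((sν/σ²) · cos(θ − θ₀)) / ∫_{−π}^{π} exp((sν/σ²) · cos u) du; that is, the conditional density of the angle given the radius s is the von Mises density with concentration sν/σ²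 and mean direction θ₀. -/
open MeasureTheory Set
open scoped Real

/-- the joint polar density factorizes as the Rice radial density times the
von Mises angular density with concentration sν/σ² and mean direction θ₀ = atan2(μ_w, μ_z). -/
theorem stmt_2
    (σ μz μw : ℝ) (hσ : 0 < σ) (hμ : (μz, μw) ≠ (0, 0))
    (ν θ₀ : ℝ) (hν : ν = Real.sqrt (μz^2 + μw^2))
    (hθ₀ : θ₀ = Complex.arg (μz + μw * Complex.I)) :
    ∀ s > (0:ℝ), ∀ θ ∈ Ioc (-π) π,
      (s / (2*π*σ^2)) *
          Real.exp (-(((s * Real.cos θ - μz)^2 + (s * Real.sin θ - μw)^2) / (2*σ^2)))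
        = ((s / (2*π*σ^2)) * Real.exp (-((s^2 + ν^2)/(2*σ^2))) *
              ∫ u in (-π)..π, Real.exp ((s*ν/σ^2) * Real.cos u))
            * Real.exp ((s*ν/σ^2) * Real.cos (θ - θ₀))
            / ∫ u in (-π)..π, Real.exp ((s*ν/σ^2) * Real.cos u) := by
  intro s hs θ hθ
  have hz : (μz + μw * Complex.I : ℂ) ≠ 0 := by
    intro h
    apply hμ
    have hre := congrArg Complex.re h
    have him := congrArg Complex.im h
    simp at hre him
    simp [hre, him]
  have habs : ‖(μz + μw * Complex.I : ℂ)‖ = ν := by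
    rw [hν, Complex.norm_def, Complex.normSq_apply]
    norm_num
    ring_nf
  have hνpos : 0 < ν := habs ▸ norm_pos_iff.mpr hz
  have hcos : ν * Real.cos θ₀ = μz := by
    rw [hθ₀, Complex.cos_arg hz, habs]
    simp
    field_simp
  have hsin : ν * Real.sin θ₀ = μw := by
    rw [hθ₀, Complex.sin_arg, habs]
    simp
    field_simp
  have hν2 : ν^2 = μz^2 + μw^2 := by
    rw [hν, Real.sq_sqrt (by positivity)]
  have hIpos : 0 < ∫ u in (-π)..π, Real.exp ((s*ν/σ^2) * Real.cos u) := by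
    apply intervalIntegral.intervalIntegral_pos_of_pos_on
    · exact (Real.continuous_exp.comp (continuous_const.mul Real.continuous_cos)).intervalIntegrable _ _
    · intro x _; exact Real.exp_pos _
    · linarith [Real.pi_pos]
  have key : (s * Real.cos θ - μz)^2 + (s * Real.sin θ - μw)^2
      = s^2 + ν^2 - 2*s*ν*(Real.cos θ * Real.cos θ₀ + Real.sin θ * Real.sin θ₀) := by
    rw [← hcos, ← hsin]
    linear_combination s^2 * Real.sin_sq_add_cos_sq θ + ν^2 * Real.sin_sq_add_cos_sq θ₀
  have hexp : -(((s * Real.cos θ - μz)^2 + (s * Real.sin θ - μw)^2) / (2*σ^2))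
      = -((s^2 + ν^2)/(2*σ^2)) + (s*ν/σ^2) * Real.cos (θ - θ₀) := by
    rw [Real.cos_sub, key]
    have hσ2 : σ^2 ≠ 0 := by positivity
    field_simp
    ring
  rw [hexp, Real.exp_add]
  rw [eq_div_iff (ne_of_gt hIpos)]
  ring
end

section
/- Let T ≥ 2 be an integer, λ > 0, and p₀ ∈ (0, 1). Let (S, 𝒮, ρ) be a probability space carrying measurable maps ξ₁, …, ξ_T : S → ℝ² (the latent positions of the influenced actor), Θ₂, …, Θ_T : S → ℝ (the angles toward the influencing actor), and Σ² : S → (0, ∞) (the transition variance). For ν ≥ 0 define the likelihood ratio L(ν) = ∫_S exp( (ν/Σ²) · ∑_{t=2}^{T} ⟨ξ_t − ξ_{t−1}, (cos Θ_t, sin Θ_t)⟩ − (T−1)·ν²/(2Σ²) ) dρ. Define on S the quantities z = ( (1/(T−1)) ∑_{t=2}^{T} ⟨ξ_t − ξ_{t−1}, (cos Θ_t, sin Θ_t)⟩ − Σ²/(λ(T−1)) ) / √(Σ²/(T−1)) and h = ((1−p₀)/(λ p₀)) · Φ(z) / ( √((T−1)/Σ²) · φ(z) ). Then, as an identity in [0,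 ∞], ∫₀^∞ ((1−p₀)/(λ p₀)) · e^{−ν/λ} · L(ν) dν = ∫_S h dρ, where φ(z) = (1/√(2π)) e^{−z²/2} is the standard normal density and Φ(z) = ∫_{−∞}^{z} φ(t) dt is the standard normal cumulative distribution function. -/
open MeasureTheory Set
open scoped Real ENNReal

/-- Shift substitution for integrals over `Ioi`. -/
lemma integral_comp_sub_right_Ioi (f : ℝ → ℝ) (a m : ℝ) :
    ∫ x in Ioi a, f (x - m) = ∫ x in Ioi (a - m), f x := by
  have A : MeasurableEmbedding fun x : ℝ => x - m :=
    (Homeomorph.subRight m).isClosedEmbedding.measurableEmbedding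
  have := MeasurableEmbedding.setIntegral_map (μ := volume) A f (Ioi (a - m))
  rw [map_sub_right_eq_self (volume : Measure ℝ) m] at this
  rw [this]
  congr 1
  ext x
  simp [sub_lt_sub_iff_right]

/-- Key Gaussian computation: the half-line integral of a shifted Gaussian. -/
lemma key_gauss (a m c : ℝ) (ha : 0 < a) (hc : 0 ≤ c) :
    ∫⁻ ν in Ioi (0:ℝ), ENNReal.ofReal (c * Real.exp (-(a/2)*(ν-m)^2))
      = ENNReal.ofReal (c * ((Real.sqrt a)⁻¹ *
          ∫ t in Iic (Real.sqrt a * m), Real.exp (-(t^2)/2))) := by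
  have hsa : 0 < Real.sqrt a := Real.sqrt_pos.mpr ha
  have hint : IntegrableOn (fun ν => c * Real.exp (-(a/2)*(ν-m)^2)) (Ioi (0:ℝ)) := by
    have h1 : Integrable (fun x : ℝ => Real.exp (-(a/2) * x^2)) := by
      exact integrable_exp_neg_mul_sq (by linarith)
    exact ((h1.comp_sub_right m).const_mul c).integrableOn
  have hnn : (0 : ℝ → ℝ) ≤ᵐ[volume.restrict (Ioi (0:ℝ))]
      fun ν => c * Real.exp (-(a/2)*(ν-m)^2) := by
    filter_upwards with ν
    exact mul_nonneg hc (Real.exp_pos _).le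
  rw [← ofReal_integral_eq_lintegral_ofReal hint hnn]
  congr 1
  rw [integral_const_mul]
  congr 1
  have hshift : ∫ ν in Ioi (0:ℝ), Real.exp (-(a/2)*(ν-m)^2)
      = ∫ ν in Ioi (0 - m : ℝ), Real.exp (-(a/2)*ν^2) :=
    integral_comp_sub_right_Ioi (fun x => Real.exp (-(a/2)*x^2)) 0 m
  rw [hshift, zero_sub]
  have hsq : ∀ x : ℝ, Real.exp (-(a/2)*x^2)
      = Real.exp (-((Real.sqrt a * x)^2)/2) := by
    intro x
    congr 1
    rw [mul_pow, Real.sq_sqrt ha.le]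
    ring
  simp_rw [hsq]
  rw [integral_comp_mul_left_Ioi (fun t => Real.exp (-(t^2)/2)) (-m) hsa]
  rw [smul_eq_mul]
  congr 1
  have : ∫ x in Ioi (Real.sqrt a * -m), Real.exp (-(x^2)/2)
      = ∫ x in Ioi (-(Real.sqrt a * m)), Real.exp (-((-x)^2)/2) := by
    simp [mul_neg]
  rw [this, integral_comp_neg_Ioi (-(Real.sqrt a * m)) (fun t => Real.exp (-(t^2)/2)),
    neg_neg]

/-- Proposition 1: as an identity in [0, ∞],
∫₀^∞ ((1−p₀)/(λp₀)) e^{−ν/λ} L(ν) dν = ∫_S h dρ, where L(ν) is the posterior expectation of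
the Gaussian transition-density likelihood ratio and h is the closed-form expression involving
the standard normal density φ and cdf Φ. -/
theorem stmt_6 (T : ℕ) (hT : 2 ≤ T) (lam p₀ : ℝ) (hlam : 0 < lam) (hp₀ : p₀ ∈ Ioo (0:ℝ) 1)
    (S : Type*) [MeasurableSpace S] (ρ : Measure S) [IsProbabilityMeasure ρ]
    (ξ : ℕ → S → ℝ × ℝ) (Θ : ℕ → S → ℝ) (sig2 : S → ℝ)
    (hξ : ∀ t, Measurable (ξ t)) (hΘ : ∀ t, Measurable (Θ t)) (hsig2 : Measurable sig2)
    (hsig2pos : ∀ s, 0 < sig2 s)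
    (proj : S → ℝ)
    (hproj : ∀ s, proj s = ∑ t ∈ Finset.Icc 2 T,
        (((ξ t s).1 - (ξ (t-1) s).1) * Real.cos (Θ t s)
          + ((ξ t s).2 - (ξ (t-1) s).2) * Real.sin (Θ t s)))
    (z h : S → ℝ)
    (hz : ∀ s, z s = (proj s / ((T:ℝ) - 1) - sig2 s / (lam * ((T:ℝ) - 1)))
        / Real.sqrt (sig2 s / ((T:ℝ) - 1)))
    (hh : ∀ s, h s = ((1 - p₀)/(lam * p₀)) *
        (∫ t in Iic (z s), (Real.sqrt (2*π))⁻¹ * Real.exp (-(t^2)/2))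
        / (Real.sqrt (((T:ℝ) - 1) / sig2 s)
            * ((Real.sqrt (2*π))⁻¹ * Real.exp (-((z s)^2)/2)))) :
    ∫⁻ ν in Ioi (0:ℝ), ENNReal.ofReal (((1 - p₀)/(lam * p₀)) * Real.exp (-ν/lam)) *
        ∫⁻ s, ENNReal.ofReal
          (Real.exp ((ν / sig2 s) * proj s - ((T:ℝ) - 1) * ν^2 / (2 * sig2 s))) ∂ρ
      = ∫⁻ s, ENNReal.ofReal (h s) ∂ρ := by
  have hT1 : (0:ℝ) < (T:ℝ) - 1 := by
    have : (2:ℝ) ≤ (T:ℝ) := by exact_mod_cast hT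
    linarith
  set c0 : ℝ := (1 - p₀)/(lam * p₀) with hc0
  have hc0pos : 0 < c0 := by
    apply div_pos (by linarith [hp₀.2]) (mul_pos hlam hp₀.1)
  have hprojm : Measurable proj := by
    have : proj = fun s => ∑ t ∈ Finset.Icc 2 T,
        (((ξ t s).1 - (ξ (t-1) s).1) * Real.cos (Θ t s)
          + ((ξ t s).2 - (ξ (t-1) s).2) * Real.sin (Θ t s)) := funext hproj
    rw [this]
    apply Finset.measurable_sum
    intro t _
    exact ((((hξ t).fst.sub (hξ (t-1)).fst).mul (Real.measurable_cos.comp (hΘ t)))).add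
      ((((hξ t).snd.sub (hξ (t-1)).snd)).mul (Real.measurable_sin.comp (hΘ t)))
  -- F ν s : the joint integrand
  set F : ℝ → S → ℝ≥0∞ := fun ν s =>
      ENNReal.ofReal (c0 * Real.exp (-ν/lam)) *
        ENNReal.ofReal (Real.exp ((ν / sig2 s) * proj s - ((T:ℝ) - 1) * ν^2 / (2 * sig2 s)))
    with hF
  have hFmeas : AEMeasurable (Function.uncurry F)
      ((volume.restrict (Ioi (0:ℝ))).prod ρ) := by
    apply Measurable.aemeasurable
    show Measurable ((fun p : ℝ × S => ENNReal.ofReal (c0 * Real.exp (-p.1/lam))) *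
      fun p => ENNReal.ofReal (Real.exp ((p.1 / sig2 p.2) * proj p.2 - ((T:ℝ) - 1) * p.1^2 / (2 * sig2 p.2))))
    apply Measurable.mul
    · exact (measurable_const.mul
        (Real.measurable_exp.comp (measurable_fst.neg.div_const lam))).ennreal_ofReal
    · apply Measurable.ennreal_ofReal
      apply Real.measurable_exp.comp
      apply Measurable.sub
      · exact (measurable_fst.div (hsig2.comp measurable_snd)).mul
          (hprojm.comp measurable_snd)
      · exact ((measurable_fst.pow_const 2).const_mul _).div
          ((hsig2.comp measurable_snd).const_mul 2)
  calc ∫⁻ ν in Ioi (0:ℝ), ENNReal.ofReal (c0 * Real.exp (-ν/lam)) *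
        ∫⁻ s, ENNReal.ofReal
          (Real.exp ((ν / sig2 s) * proj s - ((T:ℝ) - 1) * ν^2 / (2 * sig2 s))) ∂ρ
      = ∫⁻ ν in Ioi (0:ℝ), ∫⁻ s, F ν s ∂ρ := by
        refine lintegral_congr fun ν => ?_
        rw [← lintegral_const_mul' _ _ ENNReal.ofReal_ne_top]
    _ = ∫⁻ s, (∫⁻ ν in Ioi (0:ℝ), F ν s) ∂ρ := lintegral_lintegral_swap hFmeas
    _ = ∫⁻ s, ENNReal.ofReal (h s) ∂ρ := by
        refine lintegral_congr fun s => ?_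
        have hσ := hsig2pos s
        set a : ℝ := ((T:ℝ) - 1) / sig2 s with hA
        have hapos : 0 < a := div_pos hT1 hσ
        have hsa : 0 < Real.sqrt a := Real.sqrt_pos.mpr hapos
        set m : ℝ := proj s / ((T:ℝ) - 1) - sig2 s / (lam * ((T:ℝ) - 1)) with hm
        have hzm : z s = Real.sqrt a * m := by
          rw [hz s, ← hm]
          have : Real.sqrt (sig2 s / ((T:ℝ) - 1)) = (Real.sqrt a)⁻¹ := by
            rw [hA, ← Real.sqrt_inv]
            congr 1
            field_simp
          rw [this, div_eq_mul_inv, inv_inv, mul_comm]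
        -- pointwise rewrite of the integrand
        have hpt : ∀ ν : ℝ,
            F ν s = ENNReal.ofReal ((c0 * Real.exp ((z s)^2/2)) *
              Real.exp (-(a/2)*(ν-m)^2)) := by
          intro ν
          rw [hF]
          dsimp only
          rw [← ENNReal.ofReal_mul (mul_nonneg hc0pos.le (Real.exp_pos _).le)]
          congr 1
          rw [mul_assoc, mul_assoc, ← Real.exp_add, ← Real.exp_add]
          congr 2
          have hz2 : (z s)^2 = a * m^2 := by
            rw [hzm, mul_pow, Real.sq_sqrt hapos.le]
          rw [hz2, hA, hm]
          field_simp
          ring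
        calc ∫⁻ ν in Ioi (0:ℝ), F ν s
            = ∫⁻ ν in Ioi (0:ℝ), ENNReal.ofReal ((c0 * Real.exp ((z s)^2/2)) *
                Real.exp (-(a/2)*(ν-m)^2)) := lintegral_congr hpt
          _ = ENNReal.ofReal ((c0 * Real.exp ((z s)^2/2)) * ((Real.sqrt a)⁻¹ *
                ∫ t in Iic (Real.sqrt a * m), Real.exp (-(t^2)/2))) :=
              key_gauss a m _ hapos (mul_nonneg hc0pos.le (Real.exp_pos _).le)
          _ = ENNReal.ofReal (h s) := by
              congr 1
              rw [hh s, ← hzm]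
              rw [integral_const_mul]
              have h2π : (0:ℝ) < Real.sqrt (2*π) :=
                Real.sqrt_pos.mpr (by positivity)
              have hsa' : Real.sqrt (((T:ℝ) - 1) / sig2 s) = Real.sqrt a := by rw [hA]
              rw [hsa']
              rw [neg_div, Real.exp_neg]
              field_simp
end
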